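/- arXiv:1706.00151 — 7 statements merged into one kernel-verified Lean document; each statement's English description precedes it below -/
import Mathlib

section
/- Let G be a finite abelian group equipped with a ℤ-bilinear pairing b : G × G → ℚ/ℤ that is alternating (b(x,x) = 0 for all x ∈ G) and nondegenerate (the homomorphism G → Hom(G, ℚ/ℤ) sending x to b(x, −) is injective). Then the order of G is a perfect square. -/
private lemma torsion_mem_zmultiples {N : ℕ} (hN : 0 < N) {s : AddCircle (1 : ℚ)}
    (hs : addOrderOf s = N) :
    ∀ t : AddCircle (1 : ℚ), N • t = 0 → t ∈ AddSubgroup.zmultiples s := by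
  obtain ⟨m, hmN, hg, hms⟩ := (AddCircle.addOrderOf_eq_pos_iff hN).mp hs
  intro t
  induction t using QuotientAddGroup.induction_on with
  | H q =>
    intro ht
    rw [← AddCircle.coe_nsmul, AddCircle.coe_eq_zero_iff] at ht
    obtain ⟨z, hz⟩ := ht
    have hq : q = (z : ℚ) / N := by
      have h1 : (z : ℚ) = N * q := by
        simpa [zsmul_eq_mul, nsmul_eq_mul] using hz
      rw [h1]
      field_simp
    have hbez : (1 : ℤ) = m * Nat.gcdA m N + N * Nat.gcdB m N := by
      have h2 := Nat.gcd_eq_gcd_ab m N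
      rw [hg] at h2
      exact_mod_cast h2
    have key : ((z * Nat.gcdA m N) • ((m : ℚ) / N * 1) - q : ℚ) =
        (-(z * Nat.gcdB m N) : ℤ) • (1 : ℚ) := by
      have hb : (1 : ℚ) = m * Nat.gcdA m N + N * Nat.gcdB m N := by exact_mod_cast hbez
      have hN' : (N : ℚ) ≠ 0 := by positivity
      rw [hq, zsmul_eq_mul, zsmul_eq_mul]
      push_cast
      have hstep : (z : ℚ) * (Nat.gcdA m N : ℚ) * m - z = -((z : ℚ) * (Nat.gcdB m N : ℚ)) * N := by
        linear_combination (-(z : ℚ)) * hb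
      have hring : (z : ℚ) * (Nat.gcdA m N : ℚ) * ((m : ℚ) / N * 1) - (z : ℚ) / N
          = ((z : ℚ) * (Nat.gcdA m N : ℚ) * m - z) / N := by ring
      rw [hring, hstep, mul_div_cancel_right₀ _ hN', mul_one]
    refine ⟨z * Nat.gcdA m N, ?_⟩
    show (z * Nat.gcdA m N) • s = _
    rw [← hms, ← AddCircle.coe_zsmul]
    have h0 : ((((z * Nat.gcdA m N) • ((m : ℚ) / N * 1) - q : ℚ)) : AddCircle (1 : ℚ)) = 0 := by
      rw [AddCircle.coe_eq_zero_iff]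
      exact ⟨_, key.symm⟩
    exact sub_eq_zero.mp (by rwa [QuotientAddGroup.mk_sub] at h0)

private lemma zmod_eq_of_val_smul_eq {A : Type*} [AddCommGroup A] {t : A} {N : ℕ} [NeZero N]
    (ht : addOrderOf t = N) {a c : ZMod N} (h : a.val • t = c.val • t) : a = c := by
  have h' : ((a.val : ℤ) - (c.val : ℤ)) • t = 0 := by
    rw [sub_zsmul, natCast_zsmul, natCast_zsmul, h]
    abel
  have hdvd := addOrderOf_dvd_iff_zsmul_eq_zero.mpr h'
  rw [ht] at hdvd
  have hcast : ((c.val : ℤ) : ZMod N) = ((a.val : ℤ) : ZMod N) :=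
    (ZMod.intCast_eq_intCast_iff _ _ _).mpr (Int.modEq_iff_dvd.mpr hdvd)
  have := hcast.symm
  simpa [ZMod.natCast_val, ZMod.cast_id] using this

private lemma val_zsmul_eq {A : Type*} [AddCommGroup A] {t : A} {N : ℕ} [NeZero N]
    (ht : addOrderOf t = N) (w : ℤ) : (((w : ZMod N).val : ℕ)) • t = w • t := by
  have hcast : (((((w : ZMod N).val : ℕ) : ℤ)) : ZMod N) = ((w : ℤ) : ZMod N) := by
    push_cast [ZMod.natCast_val, ZMod.cast_id]
    rfl
  have hdvd : ((N : ℤ)) ∣ (((w : ZMod N).val : ℤ)) - w := by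
    simpa using (Int.modEq_iff_dvd.mp ((ZMod.intCast_eq_intCast_iff _ _ _).mp hcast).symm)
  have h0 : ((((w : ZMod N).val : ℤ)) - w) • t = 0 := by
    rw [← addOrderOf_dvd_iff_zsmul_eq_zero, ht]
    exact hdvd
  rw [sub_zsmul] at h0
  rw [← natCast_zsmul]
  exact add_neg_eq_zero.mp h0

universe u

private lemma aux' : ∀ (n : ℕ) {G : Type u} [AddCommGroup G] [Fintype G]
    (b : G →+ G →+ AddCircle (1 : ℚ)),
    (∀ x : G, b x x = 0) → Function.Injective b → Fintype.card G = n →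
    IsSquare n := by
  intro n
  induction n using Nat.strong_induction_on with
  | _ n ih =>
    intro G _ _ b halt hnd hcard
    rcases subsingleton_or_nontrivial G with hG | hG
    · rw [Fintype.card_eq_one_iff_nonempty_unique.mpr ⟨⟨⟨0⟩, fun a => Subsingleton.elim a 0⟩⟩] at hcard
      exact ⟨1, by omega⟩
    · set N := AddMonoid.exponent G with hNdef
      have hN1 : 1 < N := AddMonoid.one_lt_exponent
      have hNkill : ∀ g : G, N • g = 0 := fun g => AddMonoid.exponent_nsmul_eq_zero g
      obtain ⟨x, hx⟩ := AddMonoid.exists_addOrderOf_eq_exponent (G := G)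
        AddMonoid.ExponentExists.of_finite
      have hskew : ∀ u v : G, b u v = - b v u := by
        intro u v
        have h := halt (u + v)
        simp only [map_add, AddMonoidHom.add_apply, halt] at h
        rw [zero_add, add_zero, add_comm] at h
        exact eq_neg_of_add_eq_zero_left h
      -- the range of `b x` has exponent N
      have hRfin : Finite ↥(b x).range := by
        have : (Set.range ⇑(b x)).Finite := Set.finite_range _
        rw [← AddMonoidHom.coe_range] at this
        exact this.to_subtype
      have hEdvd : AddMonoid.exponent ↥(b x).range ∣ N := by
        apply AddMonoid.exponent_dvd_of_forall_nsmul_eq_zero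
        rintro ⟨r, g, rfl⟩
        ext
        push_cast
        rw [← map_nsmul, hNkill, map_zero]
      have hNdvd : N ∣ AddMonoid.exponent ↥(b x).range := by
        set E := AddMonoid.exponent ↥(b x).range with hE
        have hEappl : ∀ g : G, E • (b x g) = 0 := by
          intro g
          have h0 : E • (⟨b x g, AddMonoidHom.mem_range.mpr ⟨g, rfl⟩⟩ : ↥(b x).range) = 0 :=
            AddMonoid.exponent_nsmul_eq_zero _
          have := congrArg (Subtype.val) h0
          push_cast at this
          exact this
        have hbEx : b (E • x) = 0 := by
          ext g
          rw [map_nsmul]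
          exact hEappl g
        have hEx : E • x = 0 := by
          apply hnd
          rw [hbEx, map_zero]
        have := addOrderOf_dvd_of_nsmul_eq_zero hEx
        rwa [hx] at this
      have hEeq : AddMonoid.exponent ↥(b x).range = N := Nat.dvd_antisymm hEdvd hNdvd
      obtain ⟨s, hs⟩ := AddMonoid.exists_addOrderOf_eq_exponent
        (G := ↥(b x).range) AddMonoid.ExponentExists.of_finite
      obtain ⟨y, hy⟩ := AddMonoidHom.mem_range.mp s.2
      have ht : addOrderOf (b x y) = N := by
        have h1 : addOrderOf (((b x).range.subtype) s) = addOrderOf s :=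
          addOrderOf_injective (b x).range.subtype Subtype.val_injective s
        rw [hs, hEeq] at h1
        rw [hy]
        exact h1
      haveI : NeZero N := ⟨by omega⟩
      set t := b x y with htdef
      set H := (b x).ker ⊓ (b y).ker with hHdef
      have hmem : ∀ g : G, g ∈ H ↔ b x g = 0 ∧ b y g = 0 := by
        intro g
        simp [hHdef, AddSubgroup.mem_inf, AddMonoidHom.mem_ker]
      have hH1 : ∀ h : ↥H, b x ↑h = 0 ∧ b y ↑h = 0 := fun h => (hmem _).mp h.2
      have hbyx : b y x = -t := by rw [hskew y x]
      have hdecomp : ∀ g : G, ∃ (a c : ZMod N) (h : G), h ∈ H ∧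
          g = a.val • x + c.val • y + h := by
        intro g
        have h1 : N • b x g = 0 := by rw [← map_nsmul, hNkill, map_zero]
        have h2 : N • b y g = 0 := by rw [← map_nsmul, hNkill, map_zero]
        obtain ⟨k, hk⟩ := torsion_mem_zmultiples (by omega) ht _ h1
        obtain ⟨j, hj⟩ := torsion_mem_zmultiples (by omega) ht _ h2
        refine ⟨((-j : ℤ) : ZMod N), ((k : ℤ) : ZMod N),
          g - ((-j : ℤ) : ZMod N).val • x - ((k : ℤ) : ZMod N).val • y, ?_, by abel⟩
        rw [hmem]
        constructor
        · rw [map_sub, map_sub, map_nsmul, map_nsmul, halt, smul_zero, sub_zero,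
            val_zsmul_eq ht k, ← hk, sub_self]
        · rw [map_sub, map_sub, map_nsmul, map_nsmul, halt, smul_zero, sub_zero,
            hbyx, smul_neg, sub_neg_eq_add, val_zsmul_eq ht (-j), neg_zsmul, ← hj]
          abel
      have hinj : ∀ (a c : ZMod N) (h : ↥H) (a' c' : ZMod N) (h' : ↥H),
          a.val • x + c.val • y + (h : G) = a'.val • x + c'.val • y + (h' : G) →
          a = a' ∧ c = c' ∧ h = h' := by
        intro a c h a' c' h' heq
        have e1 : c.val • t = c'.val • t := by
          have e := congrArg (b x) heq
          simpa [map_add, map_nsmul, halt, (hH1 h).1, (hH1 h').1] using e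
        have hc : c = c' := zmod_eq_of_val_smul_eq ht e1
        have e2 : a.val • t = a'.val • t := by
          have e := congrArg (b y) heq
          simpa [map_add, map_nsmul, halt, (hH1 h).2, (hH1 h').2, hbyx, smul_neg,
            neg_inj] using e
        have ha : a = a' := zmod_eq_of_val_smul_eq ht e2
        refine ⟨ha, hc, ?_⟩
        rw [ha, hc] at heq
        exact Subtype.ext (by
          have := add_left_cancel heq
          exact this)
      haveI : Fintype ↥H := Fintype.ofFinite _
      have hbij : Function.Bijective (fun p : ZMod N × ZMod N × ↥H =>
          p.1.val • x + p.2.1.val • y + (p.2.2 : G)) := by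
        constructor
        · rintro ⟨a, c, h⟩ ⟨a', c', h'⟩ heq
          obtain ⟨ha, hc, hh⟩ := hinj a c h a' c' h' heq
          simp only [Prod.mk.injEq]
          exact ⟨ha, hc, hh⟩
        · intro g
          obtain ⟨a, c, h, hh, hg⟩ := hdecomp g
          exact ⟨⟨a, c, ⟨h, hh⟩⟩, hg.symm⟩
      have hcard2 : Fintype.card G = N * N * Fintype.card ↥H := by
        calc Fintype.card G = Fintype.card (ZMod N × ZMod N × ↥H) :=
              (Fintype.card_of_bijective hbij).symm
          _ = N * N * Fintype.card ↥H := by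
              simp [Fintype.card_prod, ZMod.card, mul_assoc]
      let b' : ↥H →+ ↥H →+ AddCircle (1 : ℚ) :=
        AddMonoidHom.mk' (fun h => (b ↑h).comp H.subtype)
          (fun h₁ h₂ => by ext g; simp)
      have hb'app : ∀ (h h' : ↥H), b' h h' = b ↑h ↑h' := fun h h' => rfl
      have halt' : ∀ h : ↥H, b' h h = 0 := by
        intro h
        rw [hb'app]
        exact halt ↑h
      have hnd' : Function.Injective b' := by
        rw [injective_iff_map_eq_zero]
        intro h hb0
        have hbh : b ↑h = 0 := by
          ext g
          obtain ⟨a, c, h', hh', rfl⟩ := hdecomp g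
          have hx0 : b ↑h x = 0 := by rw [hskew]; rw [(hH1 h).1, neg_zero]
          have hy0 : b ↑h y = 0 := by rw [hskew]; rw [(hH1 h).2, neg_zero]
          have hh0 : b ↑h h' = 0 := by
            have := AddMonoidHom.ext_iff.mp hb0 ⟨h', hh'⟩
            rw [hb'app] at this
            simpa using this
          simp [map_add, map_nsmul, hx0, hy0, hh0]
        have h0 : (h : G) = 0 := hnd (by rw [hbh, map_zero])
        exact Subtype.ext h0
      have hmlt : Fintype.card ↥H < n := by
        have hpos : 0 < Fintype.card ↥H := Fintype.card_pos
        have hn : n = N * N * Fintype.card ↥H := by rw [← hcard, hcard2]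
        have h4 : 2 * 2 ≤ N * N := Nat.mul_le_mul hN1 hN1
        rw [hn]
        calc Fintype.card ↥H < 2 * 2 * Fintype.card ↥H := by omega
          _ ≤ N * N * Fintype.card ↥H := Nat.mul_le_mul_right _ h4
      obtain ⟨r, hr⟩ := ih (Fintype.card ↥H) hmlt b' halt' hnd' rfl
      exact ⟨N * r, by rw [← hcard, hcard2, hr]; ring⟩


/-- A finite abelian group with a nondegenerate alternating ℤ-bilinear pairing
valued in ℚ/ℤ has order a perfect square. -/
theorem finite_abelian_group_with_nondegenerate_alternating_pairing_has_square_order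
    {G : Type*} [AddCommGroup G] [Fintype G]
    (b : G →+ G →+ AddCircle (1 : ℚ))
    (halt : ∀ x : G, b x x = 0)
    (hnd : Function.Injective b) :
    IsSquare (Fintype.card G) := by
  exact aux' (Fintype.card G) b halt hnd rfl
end

section
/- Assume 2^n = 0 in R for some integer n ≥ 1. Fix integers r and i ≥ 0 with r − i even. Then the assignment u ↦ 2^{n−1}(u ⌣_i u) descends to a well-defined operation Sq̃_i : H^r(C) → H^{2r−i}(C); that is: (a) if u ∈ C^r satisfies du = 0, then d(2^{n−1}(u ⌣_i u)) = 0; and (b) if u, u′ ∈ C^r are cocycles with u − u′ a coboundary, then 2^{n−1}(u ⌣_i u) − 2^{n−1}(u′ ⌣_i u′) is a coboundary. -/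
/-- Generalized Steenrod squares in even total degree: if `2^n = 0` in `R` and
`r - i` is even, then `u ↦ 2^(n-1) • (u ⌣ᵢ u)` sends cocycles to cocycles and
respects coboundaries, hence descends to `Sq̃ᵢ : H^r(C) → H^(2r-i)(C)`. -/
theorem generalized_steenrod_square_even_case_well_defined
    {R : Type*} [CommRing R] {M : Type*} [AddCommGroup M] [Module R M]
    (C : ℤ → Submodule R M)
    (d : M →ₗ[R] M)
    (hd : ∀ (j : ℤ), ∀ x ∈ C j, d x ∈ C (j + 1))
    (hdd : ∀ x : M, d (d x) = 0)
    (cup : ℤ → M →ₗ[R] M →ₗ[R] M)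
    (hcup_neg : ∀ i : ℤ, i < 0 → cup i = 0)
    (hcup_mem : ∀ (i r s : ℤ), ∀ u ∈ C r, ∀ v ∈ C s, cup i u v ∈ C (r + s - i))
    (hcob : ∀ (i r s : ℤ), 0 ≤ i → ∀ u ∈ C r, ∀ v ∈ C s,
      d (cup i u v) =
        (Int.negOnePow i : ℤ) • cup i (d u) v
          + (Int.negOnePow (i + r) : ℤ) • cup i u (d v)
          - (Int.negOnePow i : ℤ) • cup (i - 1) u v
          - (Int.negOnePow (r * s) : ℤ) • cup (i - 1) v u)
    (n : ℕ) (hn : 1 ≤ n) (h2n : (2 : R) ^ n = 0)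
    (r i : ℤ) (hi : 0 ≤ i) (hri : Even (r - i)) :
    (∀ u ∈ C r, d u = 0 → d ((2 : R) ^ (n - 1) • cup i u u) = 0) ∧
    (∀ u ∈ C r, ∀ u' ∈ C r, d u = 0 → d u' = 0 →
      (∃ w ∈ C (r - 1), u - u' = d w) →
      ∃ w ∈ C (2 * r - i - 1),
        (2 : R) ^ (n - 1) • cup i u u - (2 : R) ^ (n - 1) • cup i u' u' = d w) := by
  -- basic facts about 2-power torsion
  have hc2 : (2 : R) ^ (n - 1) * 2 = 0 := by
    have h1 : (2 : R) ^ (n - 1) * 2 = 2 ^ (n - 1 + 1) := (pow_succ 2 (n - 1)).symm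
    have h2 : n - 1 + 1 = n := by omega
    rw [h1, h2, h2n]
  have hkill : ∀ (k : ℤ) (x : M), Even k → (2 : R) ^ (n - 1) • (k • x) = 0 := by
    intro k x hk
    obtain ⟨m, hm⟩ := hk
    rw [← Int.cast_smul_eq_zsmul R k x, smul_smul]
    have : (2 : R) ^ (n - 1) * ((k : ℤ) : R) = ((m : ℤ) : R) * ((2 : R) ^ (n - 1) * 2) := by
      rw [hm]; push_cast; ring
    rw [this, hc2, mul_zero, zero_smul]
  -- parity facts
  obtain ⟨k0, hk0⟩ := hri
  have ev1 : Even (i + r) := ⟨i + k0, by omega⟩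
  have ev2 : Even ((r - 1) * r) := by
    have h := Int.even_mul_succ_self (r - 1)
    rwa [show r - 1 + 1 = r by ring] at h
  have ev3 : Even (r * (r - 1)) := by rw [mul_comm]; exact ev2
  have ev4 : Even (r * r - i) := by
    have h := ev2.add ⟨k0, hk0⟩
    rwa [show (r - 1) * r + (r - i) = r * r - i by ring] at h
  have ev5 : Even ((r - 1) * (r - 1) - (i + 1)) := by
    have e2 : Even ((r - 2) * (r - 1)) := by
      have h := Int.even_mul_succ_self (r - 2)
      rwa [show r - 2 + 1 = r - 1 by ring] at h
    have h := (e2.add ⟨k0, hk0⟩).add (⟨-1, by norm_num⟩ : Even (-2 : ℤ))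
    rwa [show (r - 2) * (r - 1) + (r - i) + -2 = (r - 1) * (r - 1) - (i + 1) by ring] at h
  have ev7 : Even (i - 1 + (r - 1)) := ⟨i + k0 - 1, by omega⟩
  -- the sign ε = (-1)^i
  obtain ⟨ε, hεdef⟩ : ∃ e : ℤ, e = (Int.negOnePow i : ℤ) := ⟨_, rfl⟩
  have hεunit : ε = 1 ∨ ε = -1 := by
    rw [hεdef]; exact Int.isUnit_iff.mp (Int.negOnePow i).isUnit
  have sc1 : (Int.negOnePow (i + r) : ℤ) = 1 := by rw [Int.negOnePow_even _ ev1]; rfl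
  have sc2 : (Int.negOnePow ((r - 1) * r) : ℤ) = 1 := by rw [Int.negOnePow_even _ ev2]; rfl
  have sc3 : (Int.negOnePow (r * (r - 1)) : ℤ) = 1 := by rw [Int.negOnePow_even _ ev3]; rfl
  have sc4 : (Int.negOnePow (r * r) : ℤ) = ε := by
    rw [hεdef, (Int.negOnePow_eq_iff (r * r) i).mpr ev4]
  have sc5 : (Int.negOnePow ((r - 1) * (r - 1)) : ℤ) = -ε := by
    rw [hεdef, (Int.negOnePow_eq_iff ((r - 1) * (r - 1)) (i + 1)).mpr ev5,
      Int.negOnePow_succ, Units.val_neg]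
  have sc6 : (Int.negOnePow (i - 1) : ℤ) = -ε := by
    rw [hεdef, Int.negOnePow_sub, Int.negOnePow_one, mul_neg, mul_one, Units.val_neg]
  have sc7 : (Int.negOnePow (i - 1 + (r - 1)) : ℤ) = 1 := by rw [Int.negOnePow_even _ ev7]; rfl
  constructor
  · -- cocycles go to cocycles
    intro u hu hdu
    have ha : d (cup i u u) = (-ε) • cup (i - 1) u u + (-ε) • cup (i - 1) u u := by
      have h := hcob i r r hi u hu u hu
      rw [hdu, ← hεdef, sc4] at h
      rw [h]
      simp only [map_zero, LinearMap.zero_apply, smul_zero, zero_add]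
      module
    rw [map_smul, ha, ← add_smul]
    exact hkill _ _ ⟨-ε, rfl⟩
  · -- coboundaries
    intro u hu v hv hdu hdv hcb
    obtain ⟨w, hwC, hw⟩ := hcb
    have hu_eq : u = v + d w := by rw [← hw]; abel
    have he : d w ∈ C r := by
      have h := hd (r - 1) w hwC
      rwa [show r - 1 + 1 = r by ring] at h
    -- the four coboundary formulas
    have h1 : d (cup i w v) = ε • cup i (d w) v - ε • cup (i - 1) w v - cup (i - 1) v w := by
      have h := hcob i (r - 1) r hi w hwC v hv
      rw [hdv, ← hεdef, sc2, one_smul] at h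
      rw [h]
      simp only [map_zero, smul_zero, add_zero]
    have h2 : d (cup i v w) = cup i v (d w) - ε • cup (i - 1) v w - cup (i - 1) w v := by
      have h := hcob i r (r - 1) hi v hv w hwC
      rw [hdv, ← hεdef, sc1, sc3, one_smul, one_smul] at h
      rw [h]
      simp only [map_zero, LinearMap.zero_apply, smul_zero, zero_add]
    have h3 : d (cup i (d w) w) =
        cup i (d w) (d w) - ε • cup (i - 1) (d w) w - cup (i - 1) w (d w) := by
      have h := hcob i r (r - 1) hi (d w) he w hwC
      rw [hdd w, ← hεdef, sc1, sc3, one_smul, one_smul] at h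
      rw [h]
      simp only [map_zero, LinearMap.zero_apply, smul_zero, zero_add]
    have h4 : d (cup (i - 1) w w) = (-ε) • cup (i - 1) (d w) w + cup (i - 1) w (d w)
        + ε • cup (i - 1 - 1) w w + ε • cup (i - 1 - 1) w w := by
      rcases eq_or_lt_of_le hi with h0 | hpos
      · have hm1 : cup (i - 1) = 0 := hcup_neg _ (by omega)
        have hm2 : cup (i - 1 - 1) = 0 := hcup_neg _ (by omega)
        simp [hm1, hm2]
      · have h := hcob (i - 1) (r - 1) (r - 1) (by omega) w hwC w hwC
        rw [sc6, sc7, sc5, one_smul] at h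
        rw [h]
        module
    -- the key identity
    have hkey : ε • d (cup i w v) - d (cup i v w) + d (cup i (d w) w) + ε • d (cup (i - 1) w w)
        = (cup i u u - cup i v v)
          + ((-2 : ℤ) • cup i v (d w) + (-(1 + ε)) • cup (i - 1) (d w) w
            + (ε - 1) • cup (i - 1) w (d w) + (2 : ℤ) • cup (i - 1 - 1) w w) := by
      rcases hεunit with h | h <;>
        rw [h] at h1 h2 h3 h4 ⊢ <;>
        rw [h1, h2, h3, h4, hu_eq] <;>
        simp only [map_add, LinearMap.add_apply] <;>
        module
    refine ⟨(2 : R) ^ (n - 1) •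
      (ε • cup i w v - cup i v w + cup i (d w) w + ε • cup (i - 1) w w), ?_, ?_⟩
    · refine Submodule.smul_mem _ _ ?_
      have m1 : cup i w v ∈ C (2 * r - i - 1) := by
        have h := hcup_mem i (r - 1) r w hwC v hv
        rwa [show r - 1 + r - i = 2 * r - i - 1 by ring] at h
      have m2 : cup i v w ∈ C (2 * r - i - 1) := by
        have h := hcup_mem i r (r - 1) v hv w hwC
        rwa [show r + (r - 1) - i = 2 * r - i - 1 by ring] at h
      have m3 : cup i (d w) w ∈ C (2 * r - i - 1) := by
        have h := hcup_mem i r (r - 1) (d w) he w hwC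
        rwa [show r + (r - 1) - i = 2 * r - i - 1 by ring] at h
      have m4 : cup (i - 1) w w ∈ C (2 * r - i - 1) := by
        have h := hcup_mem (i - 1) (r - 1) (r - 1) w hwC w hwC
        rwa [show r - 1 + (r - 1) - (i - 1) = 2 * r - i - 1 by ring] at h
      exact add_mem (add_mem (sub_mem (zsmul_mem m1 ε) m2) m3) (zsmul_mem m4 ε)
    · rw [map_smul]
      have hdexp : d (ε • cup i w v - cup i v w + cup i (d w) w + ε • cup (i - 1) w w)
          = ε • d (cup i w v) - d (cup i v w) + d (cup i (d w) w)
            + ε • d (cup (i - 1) w w) := by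
        simp only [map_add, map_sub, map_zsmul]
      rw [hdexp, hkey, smul_add, smul_sub]
      have hj1 : (2 : R) ^ (n - 1) • ((-2 : ℤ) • cup i v (d w)) = 0 :=
        hkill _ _ ⟨-1, by norm_num⟩
      have hj2 : (2 : R) ^ (n - 1) • ((-(1 + ε)) • cup (i - 1) (d w) w) = 0 := by
        refine hkill _ _ ?_
        rcases hεunit with h | h <;> rw [h] <;> norm_num
      have hj3 : (2 : R) ^ (n - 1) • ((ε - 1) • cup (i - 1) w (d w)) = 0 := by
        refine hkill _ _ ?_
        rcases hεunit with h | h <;> rw [h] <;> norm_num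
      have hj4 : (2 : R) ^ (n - 1) • ((2 : ℤ) • cup (i - 1 - 1) w w) = 0 :=
        hkill _ _ ⟨1, by norm_num⟩
      rw [smul_add, smul_add, smul_add, hj1, hj2, hj3, hj4]
      simp
end

section
/- Let n ≥ 1 and k be integers, and let a ∈ C^{2k} and b ∈ C^{2k+1} satisfy da = 2^n·b and db = 0. Then d(2^{n−1}·a·a + 2^{2n−1}·(a ⌣₁ b)) = 2^{2n}·(a·b − 2^{n−1}·(b ⌣₁ b)). -/
/-- The cochain-level identity at the core of the higher-Bockstein identity
`β₂(2^(n-1)x²) = [x·β(x) − Sq̃^(2k)(β(x))]`: in a ℤ-graded differential graded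
ring with a cup-1 commutativity homotopy, if `a ∈ C^(2k)`, `b ∈ C^(2k+1)`,
`da = 2^n·b` and `db = 0`, then
`d(2^(n-1)·a·a + 2^(2n-1)·(a ⌣₁ b)) = 2^(2n)·(a·b − 2^(n-1)·(b ⌣₁ b))`. -/
theorem higher_bockstein_cochain_identity
    {A : Type*} [Ring A]
    (C : ℤ → AddSubgroup A)
    (d : A →+ A)
    (hd : ∀ (j : ℤ), ∀ x ∈ C j, d x ∈ C (j + 1))
    (hdd : ∀ x : A, d (d x) = 0)
    (hone : (1 : A) ∈ C 0)
    (hmul : ∀ (r s : ℤ), ∀ x ∈ C r, ∀ y ∈ C s, x * y ∈ C (r + s))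
    (hleibniz : ∀ (r : ℤ), ∀ x ∈ C r, ∀ y : A,
      d (x * y) = d x * y + (Int.negOnePow r : ℤ) • (x * d y))
    (cup1 : A →+ A →+ A)
    (hcup1_mem : ∀ (r s : ℤ), ∀ u ∈ C r, ∀ v ∈ C s, cup1 u v ∈ C (r + s - 1))
    (hcup1 : ∀ (r s : ℤ), ∀ u ∈ C r, ∀ v ∈ C s,
      d (cup1 u v) = - cup1 (d u) v + (Int.negOnePow (1 + r) : ℤ) • cup1 u (d v)
        + u * v - (Int.negOnePow (r * s) : ℤ) • (v * u))
    (n : ℕ) (hn : 1 ≤ n) (k : ℤ)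
    (a b : A) (ha : a ∈ C (2 * k)) (hb : b ∈ C (2 * k + 1))
    (hda : d a = (2 ^ n : ℤ) • b) (hdb : d b = 0) :
    d ((2 ^ (n - 1) : ℤ) • (a * a) + (2 ^ (2 * n - 1) : ℤ) • cup1 a b)
      = (2 ^ (2 * n) : ℤ) • (a * b - (2 ^ (n - 1) : ℤ) • cup1 b b) := by
  obtain ⟨m, rfl⟩ : ∃ m, n = m + 1 := ⟨n - 1, by omega⟩
  have hdaa : d (a * a) = (2 ^ (m+1) : ℤ) • (b * a) + (2 ^ (m+1) : ℤ) • (a * b) := by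
    rw [hleibniz (2 * k) a ha a, hda, Int.negOnePow_two_mul]
    simp only [Units.val_one, one_zsmul, smul_mul_assoc, mul_smul_comm]
  have hdcup : d (cup1 a b) = - ((2 ^ (m+1) : ℤ) • cup1 b b) + a * b - b * a := by
    rw [hcup1 (2 * k) (2 * k + 1) a ha b hb, hda, hdb]
    have h1 : Int.negOnePow ((2 * k) * (2 * k + 1)) = 1 := by
      rw [show (2 * k) * (2 * k + 1) = 2 * (k * (2 * k + 1)) by ring,
        Int.negOnePow_two_mul]
    rw [h1, map_zsmul]
    simp
  have e1 : (m + 1) - 1 = m := by omega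
  have e2 : 2 * (m + 1) - 1 = 2 * m + 1 := by omega
  rw [e1, e2, map_add, map_zsmul, map_zsmul, hdaa, hdcup]
  module
end

section
/- Fix integers n ≥ 1 and k, and assume the abelian group H^{4k+1}(C) is torsion-free. Let a ∈ C^{2k} and b ∈ C^{2k+1} satisfy da = 2^n·b. Then db = 0, the reductions π_n(a·b) and π_n(2^{n−1}·(b ⌣₁ b)) are degree-(4k+1) cocycles of the quotient complex C/2^nC, and their cohomology classes in H^{4k+1}(C/2^nC) are equal. (This is the identity x ⌣ β(x) = Sq̃^{2k}(β(x)) of the main pairing identity, stated at the level of a differential graded ring with a commutativity homotopy; applied to the étale cochain ring of a smooth projective 2d-dimensional variety over a finite field it yields Theorem 4.3.) -/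
/-- The pairing identity `x ⌣ β(x) = Sq̃^(2k)(β(x))` at the level of a ℤ-graded
differential graded ring with a cup-1 commutativity homotopy, with torsion-free
components and `H^(4k+1)(C)` torsion-free: given `a ∈ C^(2k)`, `b ∈ C^(2k+1)`
with `da = 2^n·b`, we have `db = 0`, the reductions mod `2^n` of `a·b` and of
`2^(n-1)·(b ⌣₁ b)` are cocycles of `C/2^nC`, and their classes in
`H^(4k+1)(C/2^nC)` agree. -/
theorem pairing_equals_generalized_steenrod_square_of_bockstein
    {A : Type*} [Ring A]
    (C : ℤ → AddSubgroup A)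
    (d : A →+ A)
    (hd : ∀ (j : ℤ), ∀ x ∈ C j, d x ∈ C (j + 1))
    (hdd : ∀ x : A, d (d x) = 0)
    (hone : (1 : A) ∈ C 0)
    (hmul : ∀ (r s : ℤ), ∀ x ∈ C r, ∀ y ∈ C s, x * y ∈ C (r + s))
    (hleibniz : ∀ (r : ℤ), ∀ x ∈ C r, ∀ y : A,
      d (x * y) = d x * y + (Int.negOnePow r : ℤ) • (x * d y))
    (cup1 : A →+ A →+ A)
    (hcup1_mem : ∀ (r s : ℤ), ∀ u ∈ C r, ∀ v ∈ C s, cup1 u v ∈ C (r + s - 1))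
    (hcup1 : ∀ (r s : ℤ), ∀ u ∈ C r, ∀ v ∈ C s,
      d (cup1 u v) = - cup1 (d u) v + (Int.negOnePow (1 + r) : ℤ) • cup1 u (d v)
        + u * v - (Int.negOnePow (r * s) : ℤ) • (v * u))
    (htf : ∀ (j : ℤ), ∀ x ∈ C j, ∀ q : ℤ, q • x = 0 → q = 0 ∨ x = 0)
    (n : ℕ) (hn : 1 ≤ n) (k : ℤ)
    (hH : ∀ x ∈ C (4 * k + 1), d x = 0 → ∀ q : ℤ, q ≠ 0 →
      (∃ w ∈ C (4 * k), q • x = d w) → ∃ w ∈ C (4 * k), x = d w)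
    (a b : A) (ha : a ∈ C (2 * k)) (hb : b ∈ C (2 * k + 1))
    (hda : d a = (2 ^ n : ℤ) • b) :
    d b = 0 ∧
    (∃ y ∈ C (4 * k + 2), d (a * b) = (2 ^ n : ℤ) • y) ∧
    (∃ y ∈ C (4 * k + 2), d ((2 ^ (n - 1) : ℤ) • cup1 b b) = (2 ^ n : ℤ) • y) ∧
    (∃ w ∈ C (4 * k), ∃ t ∈ C (4 * k + 1),
      a * b - (2 ^ (n - 1) : ℤ) • cup1 b b = d w + (2 ^ n : ℤ) • t) := by
  have hpow : (2 ^ n : ℤ) ≠ 0 := by positivity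
  -- db = 0
  have hdb : d b = 0 := by
    have h0 : (2 ^ n : ℤ) • d b = 0 := by
      rw [← map_zsmul, ← hda, hdd]
    have hdbmem : d b ∈ C (2 * k + 1 + 1) := hd _ b hb
    rcases htf _ _ hdbmem _ h0 with h | h
    · exact absurd h hpow
    · exact h
  -- even/odd sign facts
  have s1 : (Int.negOnePow (2 * k) : ℤ) = 1 := by
    rw [Int.negOnePow_even _ ⟨k, two_mul k⟩]; rfl
  have s2 : (Int.negOnePow ((2 * k) * (2 * k + 1)) : ℤ) = 1 := by
    rw [Int.negOnePow_even _ ⟨k * (2 * k + 1), by ring⟩]; rfl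
  have s3 : (Int.negOnePow ((2 * k + 1) * (2 * k + 1)) : ℤ) = -1 := by
    rw [Int.negOnePow_odd _ ⟨2 * k * k + 2 * k, by ring⟩]; rfl
  -- d(a*b) = 2^n • (b*b)
  have hdab : d (a * b) = (2 ^ n : ℤ) • (b * b) := by
    rw [hleibniz _ a ha b, hdb, hda, s1, one_smul, mul_zero, add_zero, smul_mul_assoc]
  -- d(cup1 b b) = 2 • (b*b)
  have hdcbb : d (cup1 b b) = (2 : ℤ) • (b * b) := by
    rw [hcup1 _ _ b hb b hb, hdb, s3, map_zero, map_zero, AddMonoidHom.zero_apply,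
      neg_zero, smul_zero, zero_add, neg_one_smul, sub_neg_eq_add, two_smul, zero_add]
  -- d(cup1 a b) = -(2^n) • cup1 b b + a*b - b*a
  have hdcab : d (cup1 a b) =
      -((2 ^ n : ℤ) • cup1 b b) + a * b - b * a := by
    rw [hcup1 _ _ a ha b hb, hdb, hda, s2, one_smul, map_zero, smul_zero, add_zero,
      map_zsmul, AddMonoidHom.smul_apply]
  -- memberships
  have hbb : b * b ∈ C (4 * k + 2) := by
    have := hmul _ _ b hb b hb
    convert this using 2; ring
  have hab : a * b ∈ C (4 * k + 1) := by
    have := hmul _ _ a ha b hb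
    convert this using 2; ring
  have hcbb : cup1 b b ∈ C (4 * k + 1) := by
    have := hcup1_mem _ _ b hb b hb
    convert this using 2; ring
  have hcab : cup1 a b ∈ C (4 * k) := by
    have := hcup1_mem _ _ a ha b hb
    convert this using 2; ring
  have haa : a * a ∈ C (4 * k) := by
    have := hmul _ _ a ha a ha
    convert this using 2; ring
  -- 2^(n-1) * 2 = 2^n
  have hpow1 : (2 : ℤ) ^ (n - 1) * 2 = 2 ^ n := by
    rw [← pow_succ]; congr 1; omega
  have hdsq : d ((2 ^ (n - 1) : ℤ) • cup1 b b) = (2 ^ n : ℤ) • (b * b) := by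
    rw [map_zsmul, hdcbb, smul_smul, hpow1]
  refine ⟨hdb, ⟨b * b, hbb, hdab⟩, ⟨b * b, hbb, hdsq⟩, ?_⟩
  -- the key cocycle
  set c := a * b - (2 ^ (n - 1) : ℤ) • cup1 b b with hc
  have hcmem : c ∈ C (4 * k + 1) := sub_mem hab (zsmul_mem hcbb _)
  have hdc : d c = 0 := by
    rw [hc, map_sub, hdab, hdsq, sub_self]
  -- d(a*a) = 2^n • (b*a + a*b)
  have hdaa : d (a * a) = (2 ^ n : ℤ) • (b * a + a * b) := by
    rw [hleibniz _ a ha a, hda, s1, one_smul, smul_mul_assoc, mul_smul_comm, smul_add]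
  -- w0 := a*a + 2^n • cup1 a b satisfies d w0 = 2^(n+1) • c
  have key : (2 ^ (n + 1) : ℤ) • c = d (a * a + (2 ^ n : ℤ) • cup1 a b) := by
    rw [map_add, map_zsmul, hdaa, hdcab, hc]
    have e1 : (2 : ℤ) ^ (n + 1) * 2 ^ (n - 1) = 2 ^ n * 2 ^ n := by
      rw [← pow_add, ← pow_add]; congr 1; omega
    have e2 : (2 : ℤ) ^ (n + 1) = 2 ^ n * 2 := by rw [pow_succ]
    rw [smul_sub, smul_smul, e1, e2]
    simp only [mul_smul, smul_add, smul_sub, smul_neg, two_smul]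
    abel
  obtain ⟨w, hw, hweq⟩ := hH c hcmem hdc (2 ^ (n + 1)) (by positivity)
    ⟨a * a + (2 ^ n : ℤ) • cup1 a b, add_mem haa (zsmul_mem hcab _), key⟩
  exact ⟨w, hw, 0, zero_mem _, by rw [smul_zero, add_zero]; exact hweq⟩
end

section
/- Fix integers m and n ≥ 1, and let z be an m-cocycle of C/2^nC whose class satisfies β[z] = 0 in H^{m+1}(C/2^nC). Then: (a) there exist a ∈ C^m lifting z and b ∈ C^m such that da − 2^n·db ∈ 2^{2n}·C^{m+1}; (b) for any such a and b, the element (da − 2^n·db)/2^{2n} ∈ C^{m+1} is a cocycle, and its cohomology class in H^{m+1}(C), taken modulo the subgroup β̃(H^m(C/2^nC)), is independent of all choices: of the representative cocycle z of the class [z] ∈ H^m(C/2^nC), of the lift a, and of b; (c) 2^{2n} times the class of (da − 2^n·db)/2^{2n} is already zero in H^{m+1}(C). (This establishes that the higher Bockstein β̃₂ : ker β → H^{m+1}(C)/Im β̃ is well defined and that its image is killed by 2^{2n}.) -/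
/-- Well-definedness of the higher Bockstein `β̃₂` on `ker β`: for a cochain
complex of torsion-free abelian groups and an `m`-cocycle `z` of `C/2^nC` with
`β[z] = 0`, (a) there are a lift `a` of `z` and `b ∈ C^m` with
`da − 2^n·db ∈ 2^(2n)·C^(m+1)`; (b) for any such choices the element
`(da − 2^n·db)/2^(2n)` is a cocycle whose class in `H^(m+1)(C)` modulo
`Im β̃` is independent of all choices; (c) `2^(2n)` times that class vanishes
in `H^(m+1)(C)`. -/
theorem higher_bockstein_beta_two_well_defined
    {M : Type*} [AddCommGroup M]
    (C : ℤ → AddSubgroup M)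
    (d : M →+ M)
    (hd : ∀ (j : ℤ), ∀ x ∈ C j, d x ∈ C (j + 1))
    (hdd : ∀ x : M, d (d x) = 0)
    (htf : ∀ (j : ℤ), ∀ x ∈ C j, ∀ q : ℤ, q • x = 0 → q = 0 ∨ x = 0)
    (m : ℤ) (n : ℕ) (hn : 1 ≤ n)
    (z : M) (hz : z ∈ C m)
    (hbeta : ∃ w ∈ C m, ∃ t ∈ C (m + 1),
      d z = (2 ^ n : ℤ) • (d w + (2 ^ n : ℤ) • t)) :
    -- (a) existence of suitable lifts
    ((∃ a ∈ C m, ∃ b ∈ C m, (∃ s ∈ C m, a = z + (2 ^ n : ℤ) • s) ∧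
        ∃ c ∈ C (m + 1), d a - (2 ^ n : ℤ) • d b = (2 ^ (2 * n) : ℤ) • c) ∧
    -- (b) independence of all choices, modulo Im β̃
    (∀ z' ∈ C m, ∀ a ∈ C m, ∀ b ∈ C m, ∀ a' ∈ C m, ∀ b' ∈ C m,
      ∀ c ∈ C (m + 1), ∀ c' ∈ C (m + 1),
      (∃ w ∈ C (m - 1), ∃ t ∈ C m, z - z' = d w + (2 ^ n : ℤ) • t) →
      (∃ s ∈ C m, a = z + (2 ^ n : ℤ) • s) →
      (∃ s ∈ C m, a' = z' + (2 ^ n : ℤ) • s) →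
      d a - (2 ^ n : ℤ) • d b = (2 ^ (2 * n) : ℤ) • c →
      d a' - (2 ^ n : ℤ) • d b' = (2 ^ (2 * n) : ℤ) • c' →
      d c = 0 ∧ d c' = 0 ∧
        ∃ x ∈ C m, ∃ y ∈ C (m + 1), d x = (2 ^ n : ℤ) • y ∧
          ∃ w ∈ C m, c - c' = y + d w) ∧
    -- (c) the image of β̃₂ is killed by 2^(2n)
    (∀ a ∈ C m, ∀ b ∈ C m, ∀ c ∈ C (m + 1),
      (∃ s ∈ C m, a = z + (2 ^ n : ℤ) • s) →
      d a - (2 ^ n : ℤ) • d b = (2 ^ (2 * n) : ℤ) • c →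
      ∃ w ∈ C m, (2 ^ (2 * n) : ℤ) • c = d w)) := by
  obtain ⟨w0, hw0, t0, ht0, hdz⟩ := hbeta
  refine ⟨?_, ?_, ?_⟩
  · -- (a)
    refine ⟨z, hz, w0, hw0, ⟨0, zero_mem _, by simp⟩, t0, ht0, ?_⟩
    rw [hdz, two_mul, pow_add]
    module
  · -- (b)
    intro z' hz' a ha b hb a' ha' b' hb' c hc c' hc'
    rintro ⟨u, hu, t, ht, hzz'⟩ ⟨s, hs, rfl⟩ ⟨s', hs', rfl⟩ heq heq'
    have hdcgen : ∀ cc : M, cc ∈ C (m + 1) →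
        (2 ^ (2 * n) : ℤ) • d cc = 0 → d cc = 0 := by
      intro cc hcc h1
      rcases htf (m + 1 + 1) (d cc) (hd (m + 1) cc hcc) _ h1 with h | h
      · exact absurd h (by positivity)
      · exact h
    have hdc : d c = 0 := by
      apply hdcgen c hc
      have h := congrArg d heq
      simpa [map_sub, hdd] using h.symm
    have hdc' : d c' = 0 := by
      apply hdcgen c' hc'
      have h := congrArg d heq'
      simpa [map_sub, hdd] using h.symm
    refine ⟨hdc, hdc', ?_⟩
    have hzz'd : d z = (2 ^ n : ℤ) • d t + d z' := by
      have h := congrArg d hzz'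
      rw [map_sub, map_add, map_zsmul, hdd] at h
      rw [sub_eq_iff_eq_add] at h
      rw [h]
      abel
    set x : M := t + s - s' - (b - b') with hxdef
    have hx : x ∈ C m := by
      exact sub_mem (sub_mem (add_mem ht hs) hs') (sub_mem hb hb')
    have key : (2 ^ n : ℤ) • d x = (2 ^ n : ℤ) • ((2 ^ n : ℤ) • (c - c')) := by
      calc (2 ^ n : ℤ) • d x
          = (d (z + (2 ^ n : ℤ) • s) - (2 ^ n : ℤ) • d b)
            - (d (z' + (2 ^ n : ℤ) • s') - (2 ^ n : ℤ) • d b') := by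
            rw [hxdef, map_sub, map_sub, map_add, map_sub, map_add, map_add,
              map_zsmul, map_zsmul, hzz'd]
            module
        _ = (2 ^ (2 * n) : ℤ) • c - (2 ^ (2 * n) : ℤ) • c' := by rw [heq, heq']
        _ = (2 ^ n : ℤ) • ((2 ^ n : ℤ) • (c - c')) := by
            rw [two_mul, pow_add]; module
    have hxy : d x = (2 ^ n : ℤ) • (c - c') := by
      have h0 : (2 ^ n : ℤ) • (d x - (2 ^ n : ℤ) • (c - c')) = 0 := by
        rw [smul_sub]
        exact sub_eq_zero_of_eq key
      have hmem : d x - (2 ^ n : ℤ) • (c - c') ∈ C (m + 1) :=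
        sub_mem (hd m x hx) (AddSubgroup.zsmul_mem _ (sub_mem hc hc') _)
      rcases htf (m + 1) _ hmem _ h0 with h | h
      · exact absurd h (by positivity)
      · exact sub_eq_zero.mp h
    exact ⟨x, hx, c - c', sub_mem hc hc', hxy, 0, zero_mem _, by simp⟩
  · -- (c)
    intro a ha b hb c hc _ heq
    refine ⟨a - (2 ^ n : ℤ) • b, sub_mem ha (AddSubgroup.zsmul_mem _ hb _), ?_⟩
    rw [map_sub, map_zsmul]
    exact heq.symm
end

section
/- Fix integers m and n ≥ 1, and assume the abelian group H^{m+1}(C) is torsion-free. Then the connecting homomorphism β : H^m(C/2^nC) → H^{m+1}(C/2^nC) associated to the short exact sequence of complexes 0 → C/2^nC → C/2^{2n}C → C/2^nC → 0 (whose first map is multiplication by 2^n) is the zero map. -/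
/-- Vanishing of the Bockstein into a torsion-free top degree: for a cochain
complex of torsion-free abelian groups, if `H^(m+1)(C)` is torsion-free then
the connecting homomorphism `β : H^m(C/2^nC) → H^(m+1)(C/2^nC)` for
`0 → C/2^nC → C/2^(2n)C → C/2^nC → 0` is zero: whenever `z ∈ C^m` satisfies
`dz = 2^n·y`, the reduction of `y` is a coboundary of `C/2^nC`. -/
theorem bockstein_vanishes_of_torsionfree_cohomology
    {M : Type*} [AddCommGroup M]
    (C : ℤ → AddSubgroup M)
    (d : M →+ M)
    (hd : ∀ (j : ℤ), ∀ x ∈ C j, d x ∈ C (j + 1))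
    (hdd : ∀ x : M, d (d x) = 0)
    (htf : ∀ (j : ℤ), ∀ x ∈ C j, ∀ q : ℤ, q • x = 0 → q = 0 ∨ x = 0)
    (m : ℤ) (n : ℕ) (hn : 1 ≤ n)
    (hH : ∀ x ∈ C (m + 1), d x = 0 → ∀ q : ℤ, q ≠ 0 →
      (∃ w ∈ C m, q • x = d w) → ∃ w ∈ C m, x = d w) :
    ∀ z ∈ C m, ∀ y ∈ C (m + 1), d z = (2 ^ n : ℤ) • y →
      ∃ w ∈ C m, ∃ t ∈ C (m + 1), y = d w + (2 ^ n : ℤ) • t := by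
  intro z hz y hy hzy
  have hdy0 : d y = 0 := by
    have h1 : (2 ^ n : ℤ) • d y = 0 := by
      have := hdd z
      rw [hzy, map_zsmul] at this
      exact this
    rcases htf (m + 1 + 1) (d y) (hd (m + 1) y hy) (2 ^ n) h1 with h | h
    · exact absurd h (by positivity)
    · exact h
  have h2 : (2 : ℤ) ^ n ≠ 0 := by positivity
  obtain ⟨w, hw, hw2⟩ := hH y hy hdy0 (2 ^ n) h2 ⟨z, hz, hzy.symm⟩
  exact ⟨w, hw, 0, (C (m+1)).zero_mem, by simp [hw2]⟩
end

section
/- Fix integers n ≥ 1 and k, and assume the abelian group H^{4k+1}(C) is torsion-free. Let a, c ∈ C^{2k} and b, e ∈ C^{2k+1} satisfy da = 2^n·b and dc = 2^n·e. Then π_n(a·e) + π_n(c·b) is a degree-(4k+1) cocycle of the quotient complex C/2^nC whose cohomology class in H^{4k+1}(C/2^nC) is zero. (This is the skew-symmetry ⟨x, y⟩ + ⟨y, x⟩ = 0 of the pairing ⟨x, y⟩ := x ⌣ β(y) of Proposition 2.2, stated at the level of a differential graded ring with a commutativity homotopy.) -/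
/-- Skew-symmetry of the pairing `⟨x, y⟩ = x ⌣ β(y)` at the level of a
ℤ-graded differential graded ring with a cup-1 commutativity homotopy: if
`H^(4k+1)(C)` is torsion-free, `a, c ∈ C^(2k)`, `b, e ∈ C^(2k+1)`,
`da = 2^n·b` and `dc = 2^n·e`, then the reduction mod `2^n` of `a·e + c·b`
is a cocycle of `C/2^nC` whose class in `H^(4k+1)(C/2^nC)` vanishes. -/
theorem pairing_skew_symmetric
    {A : Type*} [Ring A]
    (C : ℤ → AddSubgroup A)
    (d : A →+ A)
    (hd : ∀ (j : ℤ), ∀ x ∈ C j, d x ∈ C (j + 1))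
    (hdd : ∀ x : A, d (d x) = 0)
    (hone : (1 : A) ∈ C 0)
    (hmul : ∀ (r s : ℤ), ∀ x ∈ C r, ∀ y ∈ C s, x * y ∈ C (r + s))
    (hleibniz : ∀ (r : ℤ), ∀ x ∈ C r, ∀ y : A,
      d (x * y) = d x * y + (Int.negOnePow r : ℤ) • (x * d y))
    (cup1 : A →+ A →+ A)
    (hcup1_mem : ∀ (r s : ℤ), ∀ u ∈ C r, ∀ v ∈ C s, cup1 u v ∈ C (r + s - 1))
    (hcup1 : ∀ (r s : ℤ), ∀ u ∈ C r, ∀ v ∈ C s,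
      d (cup1 u v) = - cup1 (d u) v + (Int.negOnePow (1 + r) : ℤ) • cup1 u (d v)
        + u * v - (Int.negOnePow (r * s) : ℤ) • (v * u))
    (htf : ∀ (j : ℤ), ∀ x ∈ C j, ∀ q : ℤ, q • x = 0 → q = 0 ∨ x = 0)
    (n : ℕ) (hn : 1 ≤ n) (k : ℤ)
    (hH : ∀ x ∈ C (4 * k + 1), d x = 0 → ∀ q : ℤ, q ≠ 0 →
      (∃ w ∈ C (4 * k), q • x = d w) → ∃ w ∈ C (4 * k), x = d w)
    (a c : A) (ha : a ∈ C (2 * k)) (hc : c ∈ C (2 * k))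
    (b e : A) (hb : b ∈ C (2 * k + 1)) (he : e ∈ C (2 * k + 1))
    (hda : d a = (2 ^ n : ℤ) • b) (hdc : d c = (2 ^ n : ℤ) • e) :
    (∃ y ∈ C (4 * k + 2), d (a * e + c * b) = (2 ^ n : ℤ) • y) ∧
    (∃ w ∈ C (4 * k), ∃ t ∈ C (4 * k + 1),
      a * e + c * b = d w + (2 ^ n : ℤ) • t) := by
  have h2n : (2 ^ n : ℤ) ≠ 0 := by positivity
  -- db = 0
  have hdb : d b = 0 := by
    have h0 : (2 ^ n : ℤ) • d b = 0 := by
      rw [← map_zsmul, ← hda, hdd]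
    rcases htf (2 * k + 1 + 1) (d b) (hd _ b hb) _ h0 with h | h
    · exact absurd h h2n
    · exact h
  have hde : d e = 0 := by
    have h0 : (2 ^ n : ℤ) • d e = 0 := by
      rw [← map_zsmul, ← hdc, hdd]
    rcases htf (2 * k + 1 + 1) (d e) (hd _ e he) _ h0 with h | h
    · exact absurd h h2n
    · exact h
  have hevk : Even (2 * k) := ⟨k, two_mul k⟩
  have hneg1 : (Int.negOnePow (2 * k) : ℤ) = 1 := by
    rw [Int.negOnePow_even _ hevk]; rfl
  -- d(a*e) = 2^n • (b*e), d(c*b) = 2^n • (e*b)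
  have hdae : d (a * e) = (2 ^ n : ℤ) • (b * e) := by
    rw [hleibniz (2 * k) a ha e, hde, hneg1, hda, smul_mul_assoc, mul_zero,
      smul_zero, add_zero]
  have hdcb : d (c * b) = (2 ^ n : ℤ) • (e * b) := by
    rw [hleibniz (2 * k) c hc b, hdb, hneg1, hdc, smul_mul_assoc, mul_zero,
      smul_zero, add_zero]
  constructor
  · refine ⟨b * e + e * b, ?_, ?_⟩
    · have := (C (4 * k + 2)).add_mem
        (by have := hmul (2 * k + 1) (2 * k + 1) b hb e he
            rwa [show (2 * k + 1) + (2 * k + 1) = 4 * k + 2 by ring] at this)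
        (by have := hmul (2 * k + 1) (2 * k + 1) e he b hb
            rwa [show (2 * k + 1) + (2 * k + 1) = 4 * k + 2 by ring] at this)
      exact this
    · rw [map_add, hdae, hdcb, smul_add]
  · -- second part
    have hbc_mem : cup1 b c ∈ C (4 * k) := by
      have := hcup1_mem (2 * k + 1) (2 * k) b hb c hc
      rwa [show (2 * k + 1) + (2 * k) - 1 = 4 * k by ring] at this
    have hbe_mem : cup1 b e ∈ C (4 * k + 1) := by
      have := hcup1_mem (2 * k + 1) (2 * k + 1) b hb e he
      rwa [show (2 * k + 1) + (2 * k + 1) - 1 = 4 * k + 1 by ring] at this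
    -- d(cup1 b c) = 2^n • cup1 b e + b*c - c*b
    have hd_bc : d (cup1 b c) = (2 ^ n : ℤ) • cup1 b e + b * c - c * b := by
      have h1 : (Int.negOnePow (1 + (2 * k + 1)) : ℤ) = 1 := by
        rw [Int.negOnePow_even _ ⟨k + 1, by ring⟩]; rfl
      have h2 : (Int.negOnePow ((2 * k + 1) * (2 * k)) : ℤ) = 1 := by
        rw [Int.negOnePow_even _ ⟨(2 * k + 1) * k, by ring⟩]; rfl
      rw [hcup1 (2 * k + 1) (2 * k) b hb c hc, hdb, hdc, h1, h2, map_zero,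
        AddMonoidHom.zero_apply, neg_zero, zero_add, one_smul, one_smul,
        map_zsmul]
    -- d(cup1 b e) = b*e + e*b
    have hd_be : d (cup1 b e) = b * e + e * b := by
      have h1 : (Int.negOnePow (1 + (2 * k + 1)) : ℤ) = 1 := by
        rw [Int.negOnePow_even _ ⟨k + 1, by ring⟩]; rfl
      have h2 : (Int.negOnePow ((2 * k + 1) * (2 * k + 1)) : ℤ) = -1 := by
        rw [Int.negOnePow_odd _ ⟨2 * k * k + 2 * k, by ring⟩]; rfl
      rw [hcup1 (2 * k + 1) (2 * k + 1) b hb e he, hdb, hde, h1, h2, map_zero,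
        AddMonoidHom.zero_apply, neg_zero, zero_add, map_zero, smul_zero,
        zero_add, neg_one_smul, sub_neg_eq_add]
    set x : A := a * e + c * b - (2 ^ n : ℤ) • cup1 b e with hx
    have hx_mem : x ∈ C (4 * k + 1) := by
      have hae : a * e ∈ C (4 * k + 1) := by
        have := hmul (2 * k) (2 * k + 1) a ha e he
        rwa [show (2 * k) + (2 * k + 1) = 4 * k + 1 by ring] at this
      have hcb : c * b ∈ C (4 * k + 1) := by
        have := hmul (2 * k) (2 * k + 1) c hc b hb
        rwa [show (2 * k) + (2 * k + 1) = 4 * k + 1 by ring] at this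
      exact (C _).sub_mem ((C _).add_mem hae hcb) ((C _).zsmul_mem hbe_mem _)
    have hdx : d x = 0 := by
      rw [hx, map_sub, map_add, hdae, hdcb, map_zsmul, hd_be]
      rw [smul_add]
      abel
    have hqx : ∃ w ∈ C (4 * k), (2 ^ n : ℤ) • x = d w := by
      refine ⟨a * c - (2 ^ n : ℤ) • cup1 b c, ?_, ?_⟩
      · have hac : a * c ∈ C (4 * k) := by
          have := hmul (2 * k) (2 * k) a ha c hc
          rwa [show (2 * k) + (2 * k) = 4 * k by ring] at this
        exact (C _).sub_mem hac ((C _).zsmul_mem hbc_mem _)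
      · have hdac : d (a * c) = (2 ^ n : ℤ) • (b * c) + (2 ^ n : ℤ) • (a * e) := by
          rw [hleibniz (2 * k) a ha c, hneg1, one_smul, hda, hdc,
            smul_mul_assoc, mul_smul_comm]
        rw [map_sub, map_zsmul, hdac, hd_bc, hx]
        simp only [smul_sub, smul_add]
        abel
    obtain ⟨w, hw_mem, hw⟩ := hH x hx_mem hdx (2 ^ n) h2n hqx
    refine ⟨w, hw_mem, cup1 b e, hbe_mem, ?_⟩
    have h' : a * e + c * b - (2 ^ n : ℤ) • cup1 b e = d w := hw
    exact sub_eq_iff_eq_add.mp h'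
end
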